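/- Let N ≥ 2 and 0 < μ^i < 1 for all i. Let (a,b) be a balanced strategy with common expected gain c. Let Δ G ∈ {0,1}^N be the vector of realized expert gains, where under the strategy exactly one expert A is corrupted (with joint distribution given by a,b) and each uncorrupted expert i is equal to 1 independently with probability μ^i. Then the N×N matrix M with entries M_{ij} = E[ΔG^i ΔG^j] is positive definite. -/

import Mathlib

open Set Finset

theorem second_moment_matrix_posDef (N : ℕ) (hN : 2 ≤ N)
    (μ a b : Fin N → ℝ) (c : ℝ)
    (hμ : ∀ i, μ i ∈ Set.Ioo (0:ℝ) 1)
    (ha : ∀ i, 0 ≤ a i) (hb : ∀ i, 0 ≤ b i)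
    (hsum : (∑ i, (a i + b i)) = 1)
    (hbal : ∀ i, (1 - a i - b i) * μ i + b i = c) :
    (Matrix.of fun i j : Fin N =>
      if i = j then c
      else (1 - a i - b i - a j - b j) * (μ i * μ j) + b i * μ j + b j * μ i).PosDef := by
  set M : Matrix (Fin N) (Fin N) ℝ := (Matrix.of fun i j : Fin N =>
      if i = j then c
      else (1 - a i - b i - a j - b j) * (μ i * μ j) + b i * μ j + b j * μ i) with hM
  -- basic facts
  have hple : ∀ i, a i + b i ≤ 1 := by
    intro i
    rw [← hsum]
    exact Finset.single_le_sum (f := fun j => a j + b j)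
      (fun j _ => add_nonneg (ha j) (hb j)) (Finset.mem_univ i)
  -- exists j with a j + b j < 1
  obtain ⟨j₀, hj₀⟩ : ∃ j, a j + b j < 1 := by
    by_contra h
    push_neg at h
    have : (N : ℝ) ≤ ∑ i, (a i + b i) := by
      calc (N : ℝ) = ∑ _i : Fin N, (1:ℝ) := by simp
        _ ≤ _ := Finset.sum_le_sum fun i _ => h i
    rw [hsum] at this
    have : (2:ℝ) ≤ 1 := le_trans (by exact_mod_cast hN) this
    linarith
  have hc0 : 0 < c := by
    have h := hbal j₀
    have h1 := (hμ j₀).1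
    have h2 := (hμ j₀).2
    nlinarith [hb j₀]
  have hc1 : c < 1 := by
    have h := hbal j₀
    have h1 := (hμ j₀).1
    have h2 := (hμ j₀).2
    nlinarith [ha j₀]
  -- v i = |μ i - c|
  set v : Fin N → ℝ := fun i => |μ i - c| with hv
  have hv0 : ∀ i, 0 ≤ v i := fun i => abs_nonneg _
  have hvp : ∀ i, v i ≤ a i + b i := by
    intro i
    have h := hbal i
    have h1 := (hμ i).1
    have h2 := (hμ i).2
    rw [hv]
    rw [abs_le]
    constructor <;> nlinarith [ha i, hb i]
  -- key : v i * (1 - a i - b i) < c * (1 - c)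
  have key : ∀ i, v i * (1 - a i - b i) < c * (1 - c) := by
    intro i
    have h := hbal i
    have h1 := (hμ i).1
    have h2 := (hμ i).2
    have hp1 : 0 ≤ 1 - a i - b i := by linarith [hple i]
    have habs : v i * (1 - a i - b i) = |(μ i - c) * (1 - a i - b i)| := by
      rw [hv, abs_mul, abs_of_nonneg hp1]
    rw [habs, abs_lt]
    rcases eq_or_lt_of_le (hple i) with heq | hlt
    · constructor <;> nlinarith [mul_pos hc0 (show (0:ℝ) < 1 - c by linarith)]
    · constructor <;> nlinarith [ha i, hb i, mul_nonneg (ha i) (hb i),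
        mul_pos (mul_pos (sub_pos.2 hlt) (sub_pos.2 hlt)) (mul_pos h1 (sub_pos.2 h2)),
        mul_nonneg (mul_nonneg (hb i) hp1) (le_of_lt (sub_pos.2 h2)),
        mul_nonneg (mul_nonneg (ha i) hp1) (le_of_lt h1)]
  rw [Matrix.posDef_iff_dotProduct_mulVec]
  constructor
  · -- Hermitian
    rw [Matrix.IsHermitian]
    ext i j
    simp only [hM, Matrix.conjTranspose_apply, Matrix.of_apply, star_trivial]
    by_cases hij : i = j
    · simp [hij]
    · rw [if_neg hij, if_neg (Ne.symm hij)]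
      ring
  · intro x hx
    -- quadratic form
    have hQ : dotProduct (star x) (M.mulVec x) =
        c^2 * (∑ i, x i)^2 - (∑ i, (μ i - c) * x i)^2
          + ∑ i, (c * (1-c) + (μ i - c)^2) * (x i)^2 := by
      have entry : ∀ i j, M i j = (c^2 - (μ i - c) * (μ j - c))
          + (if i = j then (c * (1-c) + (μ i - c)^2) else 0) := by
        intro i j
        by_cases hij : i = j
        · subst hij
          simp only [hM, Matrix.of_apply, eq_self_iff_true, if_true]
          ring
        · simp only [hM, Matrix.of_apply, if_neg hij]
          have hi := hbal i
          have hj := hbal j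
          linear_combination μ j * hi + μ i * hj
      have row : ∀ i, (∑ j, M i j * x j)
          = c^2 * (∑ j, x j) - (μ i - c) * (∑ j, (μ j - c) * x j)
            + (if i ∈ Finset.univ then (c * (1-c) + (μ i - c)^2) * x i else 0) := by
        intro i
        have : ∀ j, M i j * x j
            = c^2 * x j - (μ i - c) * ((μ j - c) * x j)
              + (if i = j then (c * (1-c) + (μ i - c)^2) * x j else 0) := by
          intro j
          rw [entry i j]
          by_cases hij : i = j
          · subst hij; simp only [eq_self_iff_true, if_true]; ring
          · simp only [if_neg hij]; ring
        rw [Finset.sum_congr rfl fun j _ => this j]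
        rw [Finset.sum_add_distrib, Finset.sum_sub_distrib, ← Finset.mul_sum,
          ← Finset.mul_sum, Finset.sum_ite_eq]
      have hstar : star x = x := star_trivial x
      rw [hstar]
      have : dotProduct x (M.mulVec x) = ∑ i, x i * (∑ j, M i j * x j) := by
        simp [dotProduct, Matrix.mulVec]
      rw [this, Finset.sum_congr rfl fun i _ => by rw [row i]]
      simp only [Finset.mem_univ, if_true]
      have expand : ∀ i, x i * (c^2 * (∑ j, x j) - (μ i - c) * (∑ j, (μ j - c) * x j)
            + (c * (1-c) + (μ i - c)^2) * x i)
          = (c^2 * (∑ j, x j)) * x i - (∑ j, (μ j - c) * x j) * ((μ i - c) * x i)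
            + (c * (1-c) + (μ i - c)^2) * (x i)^2 := by
        intro i; ring
      rw [Finset.sum_congr rfl fun i _ => expand i]
      rw [Finset.sum_add_distrib, Finset.sum_sub_distrib, ← Finset.mul_sum,
        ← Finset.mul_sum]
      ring
    -- abbreviations
    set S : ℝ := ∑ i, (μ i - c) * x i with hS
    set s : ℝ := ∑ i, v i with hs
    have hsnn : 0 ≤ s := Finset.sum_nonneg fun i _ => hv0 i
    have hCS : S^2 ≤ s * ∑ i, v i * (x i)^2 := by
      have h1 : |S| ≤ ∑ i, v i * |x i| := by
        calc |S| ≤ ∑ i, |(μ i - c) * x i| := Finset.abs_sum_le_sum_abs _ _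
          _ = ∑ i, v i * |x i| := by
              refine Finset.sum_congr rfl fun i _ => ?_
              rw [hv, abs_mul]
      have h2 : (∑ i, v i * |x i|)^2 ≤ (∑ i, v i) * ∑ i, v i * (x i)^2 := by
        refine Finset.sum_sq_le_sum_mul_sum_of_sq_eq_mul _
          (fun i _ => hv0 i) (fun i _ => mul_nonneg (hv0 i) (sq_nonneg _)) ?_
        intro i _
        have hxx : |x i|^2 = x i ^ 2 := sq_abs _
        rw [mul_pow, hxx]
        ring
      calc S^2 = |S|^2 := (sq_abs S).symm
        _ ≤ (∑ i, v i * |x i|)^2 := by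
            exact pow_le_pow_left₀ (abs_nonneg S) h1 2
        _ ≤ s * ∑ i, v i * (x i)^2 := h2
    -- coefficientwise bound
    have hsv : ∀ i, v i * s - v i * v i < c * (1 - c) := by
      intro i
      have h1 : s - v i = ∑ j ∈ Finset.univ.erase i, v j := by
        rw [hs, ← Finset.add_sum_erase Finset.univ v (Finset.mem_univ i)]
        ring
      have h2 : (∑ j ∈ Finset.univ.erase i, v j) ≤ ∑ j ∈ Finset.univ.erase i, (a j + b j) :=
        Finset.sum_le_sum fun j _ => hvp j
      have h3 : (∑ j ∈ Finset.univ.erase i, (a j + b j)) = 1 - (a i + b i) := by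
        have h := Finset.add_sum_erase Finset.univ (fun j => a j + b j) (Finset.mem_univ i)
        rw [hsum] at h
        have h' : a i + b i + ∑ x ∈ Finset.univ.erase i, (a x + b x) = 1 := h
        linarith
      have h4 : s - v i ≤ 1 - a i - b i := by rw [h1]; linarith
      have h5 : v i * (s - v i) ≤ v i * (1 - a i - b i) :=
        mul_le_mul_of_nonneg_left h4 (hv0 i)
      have h6 := key i
      nlinarith
    -- pick a nonzero coordinate
    obtain ⟨k, hk⟩ : ∃ k, x k ≠ 0 := Function.ne_iff.mp hx
    have hk2 : 0 < (x k)^2 := by positivity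
    have main : s * (∑ i, v i * (x i)^2) < ∑ i, (c * (1-c) + (μ i - c)^2) * (x i)^2 := by
      rw [Finset.mul_sum]
      have hv2 : ∀ i, (μ i - c)^2 = v i * v i := by
        intro i; rw [hv]; rw [← sq_abs]; ring
      have term : ∀ i, s * (v i * (x i)^2) ≤ (c * (1-c) + (μ i - c)^2) * (x i)^2
          - (c * (1-c) - (v i * s - v i * v i)) * (x i)^2 := by
        intro i
        rw [hv2 i]
        ring_nf
        nlinarith [sq_nonneg (x i)]
      calc (∑ i, s * (v i * (x i)^2))
          ≤ ∑ i, ((c * (1-c) + (μ i - c)^2) * (x i)^2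
              - (c * (1-c) - (v i * s - v i * v i)) * (x i)^2) :=
            Finset.sum_le_sum fun i _ => term i
        _ = (∑ i, (c * (1-c) + (μ i - c)^2) * (x i)^2)
              - ∑ i, (c * (1-c) - (v i * s - v i * v i)) * (x i)^2 := by
            rw [Finset.sum_sub_distrib]
        _ < ∑ i, (c * (1-c) + (μ i - c)^2) * (x i)^2 := by
            have hpos : 0 < ∑ i, (c * (1-c) - (v i * s - v i * v i)) * (x i)^2 := by
              refine Finset.sum_pos' (fun i _ => ?_) ⟨k, Finset.mem_univ k, ?_⟩
              · exact mul_nonneg (by linarith [hsv i]) (sq_nonneg _)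
              · exact mul_pos (by linarith [hsv k]) hk2
            linarith
    rw [hQ]
    nlinarith [sq_nonneg (∑ i, x i), hCS, main]
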